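/- Let φ be an endomorphism of ℙ¹ defined over a global field K with good reduction outside a finite set S of places, and suppose P = P_{−m+1} ↦ P_{−m+2} ↦ … ↦ P_{−1} ↦ P₀ = [0:1] ↦ [0:1] is an orbit ending in the fixed point [0:1]. Then for all integers a, b with 0 < a < b ≤ m−1 and all places v ∉ S: (a) δ_v(P_{−b}, P₀) ≤ δ_v(P_{−a}, P₀), and (b) δ_v(P_{−b}, P_{−a}) = δ_v(P_{−b}, P₀). -/

import Mathlib

noncomputable section

/-- The `v`-adic logarithmic distance between coordinate representatives of points of
`ℙ¹(K)`. -/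
def logDist {K : Type} [Field K] (v : K → WithTop ℤ) (P Q : K × K) : WithTop ℤ :=
  v (P.1 * Q.2 - Q.1 * P.2) - min (v P.1) (v P.2) - min (v Q.1) (v Q.2)

/-- Evaluation at a point of the pair of binary forms
`F(X,Y) = ∑ aᵢ Xⁱ Y^(d−i)`, `G(X,Y) = ∑ bᵢ Xⁱ Y^(d−i)` of degree `d`,
i.e. the map `φ([X:Y]) = [F(X,Y):G(X,Y)]` in homogeneous coordinates. -/
def evalPair {K : Type} [CommRing K] (d : ℕ) (a b : Fin (d+1) → K) (P : K × K) : K × K :=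
  (∑ i : Fin (d+1), a i * P.1 ^ (i:ℕ) * P.2 ^ (d - (i:ℕ)),
   ∑ i : Fin (d+1), b i * P.1 ^ (i:ℕ) * P.2 ^ (d - (i:ℕ)))

/-- The Sylvester matrix of the two binary forms of degree `d` with coefficient
vectors `a`, `b`. -/
def sylvester {K : Type} [CommRing K] (d : ℕ) (a b : Fin (d+1) → K) :
    Matrix (Fin (d+d)) (Fin (d+d)) K :=
  fun i j =>
    if _ : (i:ℕ) < d then
      if hj : (i:ℕ) ≤ (j:ℕ) ∧ (j:ℕ) ≤ (i:ℕ) + d then a ⟨(j:ℕ) - (i:ℕ), by omega⟩ else 0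
    else
      if hj : (i:ℕ) - d ≤ (j:ℕ) ∧ (j:ℕ) ≤ (i:ℕ) then b ⟨(j:ℕ) - ((i:ℕ) - d), by omega⟩ else 0

/-- The (homogeneous) resultant `Res(F,G)` of the two binary forms of degree `d`,
as the determinant of their Sylvester matrix. -/
def resultant {K : Type} [CommRing K] (d : ℕ) (a b : Fin (d+1) → K) : K :=
  (sylvester d a b).det

/-- The map `φ = [F:G]` has good reduction at the place `v`: after multiplying `F`
and `G` by a suitable nonzero scalar `u` (so as to be in `v`-reduced form: all
coefficients in the valuation ring of `v` and at least one of them a `v`-unit), the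
resultant `Res(uF, uG)` is a `v`-unit. -/
def GoodReduction {K : Type} [Field K] (v : K → WithTop ℤ) (d : ℕ)
    (a b : Fin (d+1) → K) : Prop :=
  ∃ u : K, u ≠ 0 ∧ (∀ i, 0 ≤ v (u * a i) ∧ 0 ≤ v (u * b i)) ∧
    ((∃ i, v (u * a i) = 0) ∨ (∃ i, v (u * b i) = 0)) ∧
    v (resultant d (fun i => u * a i) (fun i => u * b i)) = 0

namespace LDOL


variable {K : Type} [Field K] (v : K → WithTop ℤ)

section VBasic
variable (hv0 : v 0 = ⊤) (hvfin : ∀ x : K, x ≠ 0 → v x ≠ ⊤)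
  (hvmul : ∀ x y : K, v (x * y) = v x + v y)
  (hvadd : ∀ x y : K, min (v x) (v y) ≤ v (x + y))

include hvfin hvmul in
lemma v_one : v 1 = 0 := by
  obtain ⟨n, hn⟩ := WithTop.ne_top_iff_exists.mp (hvfin 1 one_ne_zero)
  have h := hvmul 1 1
  rw [one_mul, ← hn, ← WithTop.coe_add, WithTop.coe_eq_coe] at h
  rw [← hn]; norm_cast; omega

include hvfin hvmul in
lemma v_negone : v (-1 : K) = 0 := by
  obtain ⟨n, hn⟩ := WithTop.ne_top_iff_exists.mp (hvfin (-1) (by norm_num))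
  have h := hvmul (-1) (-1)
  rw [neg_mul_neg, one_mul, v_one v hvfin hvmul, ← hn, ← WithTop.coe_add] at h
  rw [← hn]
  have : (0:ℤ) = n + n := WithTop.coe_eq_coe.mp h
  norm_cast; omega

include hvfin hvmul in
lemma v_neg (x : K) : v (-x) = v x := by
  rw [show -x = -1 * x by ring, hvmul, v_negone v hvfin hvmul, zero_add]

include hvfin hvmul hvadd in
lemma v_sub (x y : K) : min (v x) (v y) ≤ v (x - y) := by
  rw [sub_eq_add_neg]
  have := hvadd x (-y)
  rwa [v_neg v hvfin hvmul] at this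

/-- The valuation subring. -/
def O (hv0 : v 0 = ⊤) (hvfin : ∀ x : K, x ≠ 0 → v x ≠ ⊤)
    (hvmul : ∀ x y : K, v (x * y) = v x + v y)
    (hvadd : ∀ x y : K, min (v x) (v y) ≤ v (x + y)) : Subring K where
  carrier := {x | 0 ≤ v x}
  zero_mem' := by simp [Set.mem_setOf_eq, hv0]
  one_mem' := by simp [Set.mem_setOf_eq, v_one v hvfin hvmul]
  add_mem' := by
    intro x y hx hy
    exact le_trans (le_min hx hy) (hvadd x y)
  mul_mem' := by
    intro x y hx hy
    rw [Set.mem_setOf_eq, hvmul]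
    calc (0 : WithTop ℤ) = 0 + 0 := by simp
    _ ≤ v x + v y := add_le_add hx hy
  neg_mem' := by
    intro x hx
    rwa [Set.mem_setOf_eq, v_neg v hvfin hvmul]

lemma mem_O {x : K} : x ∈ O v hv0 hvfin hvmul hvadd ↔ 0 ≤ v x := Iff.rfl

include hv0 hvadd in
lemma v_sum_ge {ι : Type*} (s : Finset ι) (f : ι → K) (c : WithTop ℤ)
    (h : ∀ i ∈ s, c ≤ v (f i)) : c ≤ v (∑ i ∈ s, f i) := by
  classical
  induction s using Finset.induction_on with
  | empty => simp [hv0]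
  | insert i s' hni ih =>
    rw [Finset.sum_insert hni]
    refine le_trans (le_min (h i (Finset.mem_insert_self i s')) ?_) (hvadd _ _)
    exact ih fun j hj => h j (Finset.mem_insert_of_mem hj)

end VBasic

section Mat
variable (hv0 : v 0 = ⊤) (hvfin : ∀ x : K, x ≠ 0 → v x ≠ ⊤)
  (hvmul : ∀ x y : K, v (x * y) = v x + v y)
  (hvadd : ∀ x y : K, min (v x) (v y) ≤ v (x + y))

include hv0 hvfin hvmul hvadd in
lemma v_det {n : ℕ} (M : Matrix (Fin n) (Fin n) K) (h : ∀ i j, 0 ≤ v (M i j)) :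
    0 ≤ v M.det := by
  set R := O v hv0 hvfin hvmul hvadd
  set M0 : Matrix (Fin n) (Fin n) R := fun i j => ⟨M i j, h i j⟩ with hM0
  have hmap : R.subtype.mapMatrix M0 = M := by
    ext i j; rfl
  have := (R.subtype.map_det M0).symm
  rw [hmap] at this
  rw [this]
  exact (M0.det).2

include hv0 hvfin hvmul hvadd in
lemma v_adjugate {n : ℕ} (M : Matrix (Fin n) (Fin n) K) (h : ∀ i j, 0 ≤ v (M i j))
    (i j : Fin n) : 0 ≤ v (M.adjugate i j) := by
  set R := O v hv0 hvfin hvmul hvadd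
  set M0 : Matrix (Fin n) (Fin n) R := fun i j => ⟨M i j, h i j⟩ with hM0
  have hmap : R.subtype.mapMatrix M0 = M := by
    ext i j; rfl
  have := R.subtype.map_adjugate M0
  rw [hmap] at this
  rw [← this]
  exact (M0.adjugate i j).2

end Mat

section Syl

/-- extend coefficient vector to ℕ -/
def extc {d : ℕ} (a : Fin (d+1) → K) : ℕ → K :=
  fun k => if h : k < d + 1 then a ⟨k, h⟩ else 0

lemma evalPair_fst (d : ℕ) (a b : Fin (d+1) → K) (x y : K) :
    (evalPair d a b (x,y)).1 = ∑ k ∈ Finset.range (d+1), extc a k * x ^ k * y ^ (d - k) := by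
  calc (evalPair d a b (x,y)).1
      = ∑ i : Fin (d+1), (fun k : ℕ => extc a k * x ^ k * y ^ (d - k)) (i:ℕ) := by
        simp only [evalPair]
        refine Finset.sum_congr rfl fun i _ => ?_
        simp [extc, i.isLt]
    _ = ∑ k ∈ Finset.range (d+1), extc a k * x ^ k * y ^ (d - k) :=
        Fin.sum_univ_eq_sum_range (fun k => extc a k * x ^ k * y ^ (d - k)) (d+1)

lemma evalPair_snd (d : ℕ) (a b : Fin (d+1) → K) (x y : K) :
    (evalPair d a b (x,y)).2 = ∑ k ∈ Finset.range (d+1), extc b k * x ^ k * y ^ (d - k) := by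
  calc (evalPair d a b (x,y)).2
      = ∑ i : Fin (d+1), (fun k : ℕ => extc b k * x ^ k * y ^ (d - k)) (i:ℕ) := by
        simp only [evalPair]
        refine Finset.sum_congr rfl fun i _ => ?_
        simp [extc, i.isLt]
    _ = ∑ k ∈ Finset.range (d+1), extc b k * x ^ k * y ^ (d - k) :=
        Fin.sum_univ_eq_sum_range (fun k => extc b k * x ^ k * y ^ (d - k)) (d+1)

lemma sylvester_mulVec (d : ℕ) (hd : 1 ≤ d) (a b : Fin (d+1) → K) (x y : K) :
    (sylvester d a b).mulVec (fun j => x ^ (j:ℕ) * y ^ (d+d-1-(j:ℕ)))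
    = fun i : Fin (d+d) => if (i:ℕ) < d
        then x ^ (i:ℕ) * y ^ (d-1-(i:ℕ)) * (evalPair d a b (x,y)).1
        else x ^ ((i:ℕ)-d) * y ^ (d+d-1-(i:ℕ)) * (evalPair d a b (x,y)).2 := by
  funext i
  have hmv : (sylvester d a b).mulVec (fun j => x ^ (j:ℕ) * y ^ (d+d-1-(j:ℕ))) i
      = ∑ j : Fin (d+d), sylvester d a b i j * (x ^ (j:ℕ) * y ^ (d+d-1-(j:ℕ))) := by
    simp [Matrix.mulVec, dotProduct]
  rw [hmv]
  by_cases hi : (i:ℕ) < d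
  · have hentry : ∀ j : Fin (d+d), sylvester d a b i j =
        if (i:ℕ) ≤ (j:ℕ) ∧ (j:ℕ) ≤ (i:ℕ) + d then extc a ((j:ℕ) - (i:ℕ)) else 0 := by
      intro j
      rw [sylvester, dif_pos hi]
      split_ifs with h
      · rw [extc, dif_pos (by omega)]
      · rfl
    rw [if_pos hi]
    calc (∑ j : Fin (d+d), sylvester d a b i j * (x ^ (j:ℕ) * y ^ (d+d-1-(j:ℕ))))
        = ∑ j : Fin (d+d), (fun n : ℕ =>
            (if (i:ℕ) ≤ n ∧ n ≤ (i:ℕ) + d then extc a (n - (i:ℕ)) else 0)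
              * (x ^ n * y ^ (d+d-1-n))) (j:ℕ) := by
          refine Finset.sum_congr rfl fun j _ => ?_
          rw [hentry j]
      _ = ∑ n ∈ Finset.range (d+d),
            (if (i:ℕ) ≤ n ∧ n ≤ (i:ℕ) + d then extc a (n - (i:ℕ)) else 0)
              * (x ^ n * y ^ (d+d-1-n)) :=
          Fin.sum_univ_eq_sum_range (fun n =>
            (if (i:ℕ) ≤ n ∧ n ≤ (i:ℕ) + d then extc a (n - (i:ℕ)) else 0)
              * (x ^ n * y ^ (d+d-1-n))) (d+d)
      _ = ∑ n ∈ Finset.range (d+d), (if n ∈ Finset.Icc (i:ℕ) ((i:ℕ)+d)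
            then extc a (n - (i:ℕ)) * (x ^ n * y ^ (d+d-1-n)) else 0) := by
          refine Finset.sum_congr rfl fun n _ => ?_
          simp only [Finset.mem_Icc]
          split_ifs <;> simp
      _ = ∑ n ∈ Finset.range (d+d) ∩ Finset.Icc (i:ℕ) ((i:ℕ)+d),
            extc a (n - (i:ℕ)) * (x ^ n * y ^ (d+d-1-n)) := Finset.sum_ite_mem _ _ _
      _ = ∑ n ∈ Finset.Icc (i:ℕ) ((i:ℕ)+d), extc a (n - (i:ℕ)) * (x ^ n * y ^ (d+d-1-n)) := by
          congr 1
          rw [Finset.inter_eq_right]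
          intro n hn
          rw [Finset.mem_Icc] at hn
          rw [Finset.mem_range]
          omega
      _ = ∑ k ∈ Finset.range ((i:ℕ)+d+1-(i:ℕ)),
            extc a ((i:ℕ) + k - (i:ℕ)) * (x ^ ((i:ℕ)+k) * y ^ (d+d-1-((i:ℕ)+k))) := by
          rw [← Finset.Ico_add_one_right_eq_Icc, Finset.sum_Ico_eq_sum_range]
      _ = x ^ (i:ℕ) * y ^ (d-1-(i:ℕ)) * (evalPair d a b (x,y)).1 := by
          rw [evalPair_fst, Finset.mul_sum, show (i:ℕ)+d+1-(i:ℕ) = d+1 by omega]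
          refine Finset.sum_congr rfl fun k hk => ?_
          rw [Finset.mem_range] at hk
          rw [show (i:ℕ) + k - (i:ℕ) = k by omega,
            show (i:ℕ) + k = k + (i:ℕ) by omega, pow_add,
            show d+d-1-(k+(i:ℕ)) = (d-1-(i:ℕ)) + (d-k) by omega, pow_add]
          ring
  · have hentry : ∀ j : Fin (d+d), sylvester d a b i j =
        if (i:ℕ) - d ≤ (j:ℕ) ∧ (j:ℕ) ≤ (i:ℕ) then extc b ((j:ℕ) - ((i:ℕ)-d)) else 0 := by
      intro j
      rw [sylvester, dif_neg hi]
      split_ifs with h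
      · rw [extc, dif_pos (by omega)]
      · rfl
    rw [if_neg hi]
    have hile : (i:ℕ) ≤ d + d - 1 := by omega
    have hdi : d ≤ (i:ℕ) := by omega
    calc (∑ j : Fin (d+d), sylvester d a b i j * (x ^ (j:ℕ) * y ^ (d+d-1-(j:ℕ))))
        = ∑ j : Fin (d+d), (fun n : ℕ =>
            (if (i:ℕ) - d ≤ n ∧ n ≤ (i:ℕ) then extc b (n - ((i:ℕ)-d)) else 0)
              * (x ^ n * y ^ (d+d-1-n))) (j:ℕ) := by
          refine Finset.sum_congr rfl fun j _ => ?_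
          rw [hentry j]
      _ = ∑ n ∈ Finset.range (d+d),
            (if (i:ℕ) - d ≤ n ∧ n ≤ (i:ℕ) then extc b (n - ((i:ℕ)-d)) else 0)
              * (x ^ n * y ^ (d+d-1-n)) :=
          Fin.sum_univ_eq_sum_range (fun n =>
            (if (i:ℕ) - d ≤ n ∧ n ≤ (i:ℕ) then extc b (n - ((i:ℕ)-d)) else 0)
              * (x ^ n * y ^ (d+d-1-n))) (d+d)
      _ = ∑ n ∈ Finset.range (d+d), (if n ∈ Finset.Icc ((i:ℕ)-d) (i:ℕ)
            then extc b (n - ((i:ℕ)-d)) * (x ^ n * y ^ (d+d-1-n)) else 0) := by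
          refine Finset.sum_congr rfl fun n _ => ?_
          simp only [Finset.mem_Icc]
          split_ifs <;> simp
      _ = ∑ n ∈ Finset.range (d+d) ∩ Finset.Icc ((i:ℕ)-d) (i:ℕ),
            extc b (n - ((i:ℕ)-d)) * (x ^ n * y ^ (d+d-1-n)) := Finset.sum_ite_mem _ _ _
      _ = ∑ n ∈ Finset.Icc ((i:ℕ)-d) (i:ℕ), extc b (n - ((i:ℕ)-d)) * (x ^ n * y ^ (d+d-1-n)) := by
          congr 1
          rw [Finset.inter_eq_right]
          intro n hn
          rw [Finset.mem_Icc] at hn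
          rw [Finset.mem_range]
          omega
      _ = ∑ k ∈ Finset.range ((i:ℕ)+1-((i:ℕ)-d)),
            extc b (((i:ℕ)-d) + k - ((i:ℕ)-d)) * (x ^ (((i:ℕ)-d)+k) * y ^ (d+d-1-(((i:ℕ)-d)+k))) := by
          rw [← Finset.Ico_add_one_right_eq_Icc, Finset.sum_Ico_eq_sum_range]
      _ = x ^ ((i:ℕ)-d) * y ^ (d+d-1-(i:ℕ)) * (evalPair d a b (x,y)).2 := by
          rw [evalPair_snd, Finset.mul_sum, show (i:ℕ)+1-((i:ℕ)-d) = d+1 by omega]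
          refine Finset.sum_congr rfl fun k hk => ?_
          rw [Finset.mem_range] at hk
          rw [show (i:ℕ) - d + k - ((i:ℕ)-d) = k by omega,
            show (i:ℕ) - d + k = k + ((i:ℕ)-d) by omega, pow_add,
            show d+d-1-(k+((i:ℕ)-d)) = (d+d-1-(i:ℕ)) + (d-k) by omega, pow_add]
          ring

end Syl

section WT

lemma wsub_zero (X : WithTop ℤ) : X - 0 = X := by
  induction X using WithTop.recTopCoe with
  | top => rfl
  | coe a =>
    rw [show (0 : WithTop ℤ) = ((0:ℤ) : WithTop ℤ) by rfl,
      ← WithTop.LinearOrderedAddCommGroup.coe_sub]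
    norm_num

lemma wadd_sub_add (n : ℤ) (X Y : WithTop ℤ) :
    ((n : WithTop ℤ) + X) - ((n : WithTop ℤ) + Y) = X - Y := by
  induction X using WithTop.recTopCoe with
  | top =>
    induction Y using WithTop.recTopCoe with
    | top => simp
    | coe b => simp
  | coe a =>
    induction Y using WithTop.recTopCoe with
    | top => simp
    | coe b =>
      rw [← WithTop.coe_add, ← WithTop.coe_add,
        ← WithTop.LinearOrderedAddCommGroup.coe_sub,
        ← WithTop.LinearOrderedAddCommGroup.coe_sub]
      norm_cast
      omega

lemma wsub_sub_comm (X A B : WithTop ℤ) : X - A - B = X - B - A := by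
  induction X using WithTop.recTopCoe with
  | top => simp
  | coe a =>
    induction A using WithTop.recTopCoe with
    | top => simp
    | coe b =>
      induction B using WithTop.recTopCoe with
      | top => simp
      | coe c =>
        rw [← WithTop.LinearOrderedAddCommGroup.coe_sub,
          ← WithTop.LinearOrderedAddCommGroup.coe_sub,
          ← WithTop.LinearOrderedAddCommGroup.coe_sub,
          ← WithTop.LinearOrderedAddCommGroup.coe_sub]
        norm_cast
        omega

end WT

section LD
variable (hv0 : v 0 = ⊤) (hvfin : ∀ x : K, x ≠ 0 → v x ≠ ⊤)
  (hvmul : ∀ x y : K, v (x * y) = v x + v y)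
  (hvadd : ∀ x y : K, min (v x) (v y) ≤ v (x + y))

lemma logDist_norm (P Q : K × K) (hP : min (v P.1) (v P.2) = 0)
    (hQ : min (v Q.1) (v Q.2) = 0) :
    logDist v P Q = v (P.1 * Q.2 - Q.1 * P.2) := by
  rw [logDist, hP, hQ, wsub_zero, wsub_zero]

include hvfin hvmul in
lemma logDist_comm (P Q : K × K) : logDist v P Q = logDist v Q P := by
  rw [logDist, logDist, show Q.1 * P.2 - P.1 * Q.2 = -(P.1 * Q.2 - Q.1 * P.2) by ring,
    v_neg v hvfin hvmul, wsub_sub_comm]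

include hvfin hvmul in
lemma logDist_smul_left (c : K) (hc : c ≠ 0) (P Q : K × K) :
    logDist v (c • P) Q = logDist v P Q := by
  obtain ⟨n, hn⟩ := WithTop.ne_top_iff_exists.mp (hvfin c hc)
  have h1 : (c • P).1 = c * P.1 := rfl
  have h2 : (c • P).2 = c * P.2 := rfl
  rw [logDist, logDist, h1, h2,
    show c * P.1 * Q.2 - Q.1 * (c * P.2) = c * (P.1 * Q.2 - Q.1 * P.2) by ring,
    hvmul, hvmul, hvmul, ← hn, min_add_add_left, wadd_sub_add]

include hvfin hvmul in
lemma logDist_smul_right (c : K) (hc : c ≠ 0) (P Q : K × K) :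
    logDist v P (c • Q) = logDist v P Q := by
  rw [logDist_comm v hvfin hvmul, logDist_smul_left v hvfin hvmul c hc,
    logDist_comm v hvfin hvmul]

include hv0 hvfin hvmul in
lemma exists_norm (hvdisc : ∀ n : ℤ, ∃ x : K, v x = (n : WithTop ℤ))
    (P : K × K) (hP : P ≠ (0,0)) :
    ∃ c : K, c ≠ 0 ∧ 0 ≤ v (c • P).1 ∧ 0 ≤ v (c • P).2 ∧
      min (v (c • P).1) (v (c • P).2) = 0 := by
  have hne : min (v P.1) (v P.2) ≠ ⊤ := by
    intro h
    rw [min_eq_top] at h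
    apply hP
    have h1 : P.1 = 0 := by
      by_contra h1; exact hvfin P.1 h1 h.1
    have h2 : P.2 = 0 := by
      by_contra h2; exact hvfin P.2 h2 h.2
    exact Prod.ext h1 h2
  obtain ⟨n, hn⟩ := WithTop.ne_top_iff_exists.mp hne
  obtain ⟨c, hc⟩ := hvdisc (-n)
  have hcne : c ≠ 0 := by
    intro h; rw [h, hv0] at hc; exact (WithTop.coe_ne_top (a := -n)) hc.symm
  have h1 : (c • P).1 = c * P.1 := rfl
  have h2 : (c • P).2 = c * P.2 := rfl
  have hmin : min (v (c • P).1) (v (c • P).2) = 0 := by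
    rw [h1, h2, hvmul, hvmul, min_add_add_left, hc, ← hn, ← WithTop.coe_add]
    norm_num
  refine ⟨c, hcne, ?_, ?_, hmin⟩
  · exact le_trans (le_of_eq hmin.symm) (min_le_left _ _)
  · exact le_trans (le_of_eq hmin.symm) (min_le_right _ _)

include hvmul hvadd in
lemma ultra (P Q R : K × K) (hP1 : 0 ≤ v P.1) (hP2 : 0 ≤ v P.2)
    (hR1 : 0 ≤ v R.1) (hR2 : 0 ≤ v R.2)
    (hQmin : min (v Q.1) (v Q.2) = 0) :
    min (v (P.1 * Q.2 - Q.1 * P.2)) (v (Q.1 * R.2 - R.1 * Q.2))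
      ≤ v (P.1 * R.2 - R.1 * P.2) := by
  rcases min_eq_iff.mp hQmin with ⟨h, _⟩ | ⟨h, _⟩
  · -- v Q.1 = 0
    have hid : R.1 * (P.1 * Q.2 - Q.1 * P.2) + P.1 * (Q.1 * R.2 - R.1 * Q.2)
        = Q.1 * (P.1 * R.2 - R.1 * P.2) := by ring
    have := hvadd (R.1 * (P.1 * Q.2 - Q.1 * P.2)) (P.1 * (Q.1 * R.2 - R.1 * Q.2))
    rw [hid, hvmul, hvmul, hvmul, h, zero_add] at this
    refine le_trans (min_le_min ?_ ?_) this
    · exact le_add_of_nonneg_left hR1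
    · exact le_add_of_nonneg_left hP1
  · -- v Q.2 = 0
    have hid : R.2 * (P.1 * Q.2 - Q.1 * P.2) + P.2 * (Q.1 * R.2 - R.1 * Q.2)
        = Q.2 * (P.1 * R.2 - R.1 * P.2) := by ring
    have := hvadd (R.2 * (P.1 * Q.2 - Q.1 * P.2)) (P.2 * (Q.1 * R.2 - R.1 * Q.2))
    rw [hid, hvmul, hvmul, hvmul, h, zero_add] at this
    refine le_trans (min_le_min ?_ ?_) this
    · exact le_add_of_nonneg_left hR2
    · exact le_add_of_nonneg_left hP2

end LD

section Core
variable (hv0 : v 0 = ⊤) (hvfin : ∀ x : K, x ≠ 0 → v x ≠ ⊤)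
  (hvmul : ∀ x y : K, v (x * y) = v x + v y)
  (hvadd : ∀ x y : K, min (v x) (v y) ≤ v (x + y))

include hvmul in
lemma vmul_nonneg {x y : K} (hx : 0 ≤ v x) (hy : 0 ≤ v y) : 0 ≤ v (x * y) := by
  rw [hvmul]
  calc (0 : WithTop ℤ) = 0 + 0 := by simp
  _ ≤ v x + v y := add_le_add hx hy

include hvfin hvmul in
lemma vpow_nonneg {x : K} (hx : 0 ≤ v x) (n : ℕ) : 0 ≤ v (x ^ n) := by
  induction n with
  | zero => rw [pow_zero, v_one v hvfin hvmul]
  | succ k ih =>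
    rw [pow_succ]
    exact vmul_nonneg v hvmul ih hx

include hvfin hvmul in
lemma vpow_zero {x : K} (hx : v x = 0) (n : ℕ) : v (x ^ n) = 0 := by
  induction n with
  | zero => rw [pow_zero, v_one v hvfin hvmul]
  | succ k ih =>
    rw [pow_succ, hvmul, ih, hx, add_zero]

include hv0 in
lemma v_extc {d : ℕ} {a : Fin (d+1) → K} (ha : ∀ i, 0 ≤ v (a i)) (k : ℕ) :
    0 ≤ v (extc a k) := by
  rw [extc]
  split_ifs with h
  · exact ha _
  · rw [hv0]; exact le_top

include hv0 hvfin hvmul hvadd in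
lemma v_evalPair_int {d : ℕ} {a b : Fin (d+1) → K}
    (ha : ∀ i, 0 ≤ v (a i)) (hb : ∀ i, 0 ≤ v (b i)) {x y : K}
    (hx : 0 ≤ v x) (hy : 0 ≤ v y) :
    0 ≤ v (evalPair d a b (x,y)).1 ∧ 0 ≤ v (evalPair d a b (x,y)).2 := by
  constructor
  · rw [evalPair_fst]
    refine v_sum_ge v hv0 hvadd _ _ _ fun k _ => ?_
    exact vmul_nonneg v hvmul (vmul_nonneg v hvmul (v_extc v hv0 ha k)
      (vpow_nonneg v hvfin hvmul hx k)) (vpow_nonneg v hvfin hvmul hy _)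
  · rw [evalPair_snd]
    refine v_sum_ge v hv0 hvadd _ _ _ fun k _ => ?_
    exact vmul_nonneg v hvmul (vmul_nonneg v hvmul (v_extc v hv0 hb k)
      (vpow_nonneg v hvfin hvmul hx k)) (vpow_nonneg v hvfin hvmul hy _)

include hv0 in
lemma v_sylvester_int {d : ℕ} {a b : Fin (d+1) → K}
    (ha : ∀ i, 0 ≤ v (a i)) (hb : ∀ i, 0 ≤ v (b i)) (i j : Fin (d+d)) :
    0 ≤ v (sylvester d a b i j) := by
  rw [sylvester]
  split_ifs
  · exact ha _
  · rw [hv0]; exact le_top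
  · exact hb _
  · rw [hv0]; exact le_top

include hv0 hvfin hvmul hvadd in
lemma reduced_evalPair (d : ℕ) (hd : 1 ≤ d) (a b : Fin (d+1) → K)
    (ha : ∀ i, 0 ≤ v (a i)) (hb : ∀ i, 0 ≤ v (b i))
    (hres : v (resultant d a b) = 0) (x y : K)
    (hx : 0 ≤ v x) (hy : 0 ≤ v y) (hmin : min (v x) (v y) = 0) :
    min (v (evalPair d a b (x,y)).1) (v (evalPair d a b (x,y)).2) = 0 := by
  obtain ⟨hF, hG⟩ := v_evalPair_int v hv0 hvfin hvmul hvadd ha hb hx hy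
  refine le_antisymm ?_ (le_min hF hG)
  -- key: use the resultant identity
  set S := sylvester d a b with hS
  set w : Fin (d+d) → K := fun j => x ^ (j:ℕ) * y ^ (d+d-1-(j:ℕ)) with hw
  have hadj : S.adjugate.mulVec (S.mulVec w) = S.det • w := by
    rw [Matrix.mulVec_mulVec, Matrix.adjugate_mul, Matrix.smul_mulVec,
      Matrix.one_mulVec]
  have hu := sylvester_mulVec d hd a b x y
  -- pick the right index
  have hkey : ∀ j0 : Fin (d+d), v (w j0) = 0 →
      min (v (evalPair d a b (x,y)).1) (v (evalPair d a b (x,y)).2) ≤ 0 := by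
    intro j0 hwj0
    have hdet : v (S.det * w j0) = 0 := by
      rw [hvmul, hwj0, add_zero]
      exact hres
    have happ : (S.det • w) j0 = S.det * w j0 := rfl
    have hsum : (S.adjugate.mulVec (S.mulVec w)) j0
        = ∑ i : Fin (d+d), S.adjugate j0 i * (S.mulVec w) i := by
      simp [Matrix.mulVec, dotProduct]
    have : v (∑ i : Fin (d+d), S.adjugate j0 i * (S.mulVec w) i) = 0 := by
      rw [← hsum, hadj, happ, hdet]
    rw [← this]
    refine v_sum_ge v hv0 hvadd _ _ _ fun i _ => ?_
    have hadji : 0 ≤ v (S.adjugate j0 i) :=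
      v_adjugate v hv0 hvfin hvmul hvadd S (v_sylvester_int v hv0 ha hb) j0 i
    have hu' : S.mulVec w = _ := hu
    simp only [hu']
    by_cases hi : (i:ℕ) < d
    · rw [if_pos hi, hvmul, hvmul]
      have h1 : 0 ≤ v (x ^ (i:ℕ)) := vpow_nonneg v hvfin hvmul hx _
      have h2 : 0 ≤ v (y ^ (d-1-(i:ℕ))) := vpow_nonneg v hvfin hvmul hy _
      calc min (v (evalPair d a b (x,y)).1) (v (evalPair d a b (x,y)).2)
          ≤ v (evalPair d a b (x,y)).1 := min_le_left _ _
        _ ≤ v (x ^ (i:ℕ) * y ^ (d-1-(i:ℕ))) + v (evalPair d a b (x,y)).1 :=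
            le_add_of_nonneg_left (vmul_nonneg v hvmul h1 h2)
        _ ≤ v (S.adjugate j0 i) + (v (x ^ (i:ℕ) * y ^ (d-1-(i:ℕ))) + v (evalPair d a b (x,y)).1) :=
            le_add_of_nonneg_left hadji
        _ = v (S.adjugate j0 i) + (v (x ^ (i:ℕ) * y ^ (d-1-(i:ℕ))) + v (evalPair d a b (x,y)).1) := rfl
    · rw [if_neg hi, hvmul, hvmul]
      have h1 : 0 ≤ v (x ^ ((i:ℕ)-d)) := vpow_nonneg v hvfin hvmul hx _
      have h2 : 0 ≤ v (y ^ (d+d-1-(i:ℕ))) := vpow_nonneg v hvfin hvmul hy _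
      calc min (v (evalPair d a b (x,y)).1) (v (evalPair d a b (x,y)).2)
          ≤ v (evalPair d a b (x,y)).2 := min_le_right _ _
        _ ≤ v (x ^ ((i:ℕ)-d) * y ^ (d+d-1-(i:ℕ))) + v (evalPair d a b (x,y)).2 :=
            le_add_of_nonneg_left (vmul_nonneg v hvmul h1 h2)
        _ ≤ v (S.adjugate j0 i) + (v (x ^ ((i:ℕ)-d) * y ^ (d+d-1-(i:ℕ))) + v (evalPair d a b (x,y)).2) :=
            le_add_of_nonneg_left hadji
  rcases min_eq_iff.mp hmin with ⟨hx0, _⟩ | ⟨hy0, _⟩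
  · refine hkey ⟨d+d-1, by omega⟩ ?_
    show v (x ^ (d+d-1) * y ^ (d+d-1-(d+d-1))) = 0
    rw [show (d+d-1) - (d+d-1) = 0 by omega, pow_zero, mul_one,
      vpow_zero v hvfin hvmul hx0]
  · refine hkey ⟨0, by omega⟩ ?_
    show v (x ^ 0 * y ^ (d+d-1-0)) = 0
    rw [pow_zero, one_mul, vpow_zero v hvfin hvmul hy0]

include hv0 hvfin hvmul hvadd in
lemma cross_term (d : ℕ) (x1 y1 x2 y2 : K)
    (hx1 : 0 ≤ v x1) (hy1 : 0 ≤ v y1) (hx2 : 0 ≤ v x2) (hy2 : 0 ≤ v y2) :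
    ∀ i j : ℕ, i ≤ d → j ≤ d →
    ∃ g : K, x1^i * y1^(d-i) * (x2^j * y2^(d-j)) - x2^i * y2^(d-i) * (x1^j * y1^(d-j))
        = (x1*y2 - x2*y1) * g ∧ 0 ≤ v g := by
  have main : ∀ i j : ℕ, i ≤ j → j ≤ d →
      ∃ g : K, x1^i * y1^(d-i) * (x2^j * y2^(d-j)) - x2^i * y2^(d-i) * (x1^j * y1^(d-j))
        = (x1*y2 - x2*y1) * g ∧ 0 ≤ v g := by
    intro i j hij hjd
    set k := j - i with hk
    set A := x2 * y1 with hA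
    set B := x1 * y2 with hB
    set C := x1^i * x2^i * y1^(d-j) * y2^(d-j) with hC
    set G := ∑ l ∈ Finset.range k, A ^ l * B ^ (k - 1 - l) with hG
    refine ⟨-(C * G), ?_, ?_⟩
    · have h1 : x1^i * y1^(d-i) * (x2^j * y2^(d-j)) = C * A ^ k := by
        rw [hC, hA, mul_pow, show j = i + k by omega, show d - i = (d - (i+k)) + k by omega,
          pow_add, pow_add]
        ring
      have h2 : x2^i * y2^(d-i) * (x1^j * y1^(d-j)) = C * B ^ k := by
        rw [hC, hB, mul_pow, show j = i + k by omega, show d - i = (d - (i+k)) + k by omega,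
          pow_add, pow_add]
        ring
      have h3 : G * (A - B) = A ^ k - B ^ k := geom_sum₂_mul A B k
      calc x1^i * y1^(d-i) * (x2^j * y2^(d-j)) - x2^i * y2^(d-i) * (x1^j * y1^(d-j))
          = C * (A ^ k - B ^ k) := by rw [h1, h2]; ring
        _ = C * (G * (A - B)) := by rw [h3]
        _ = (x1*y2 - x2*y1) * -(C * G) := by rw [hA, hB]; ring
    · have hCint : 0 ≤ v C := by
        exact vmul_nonneg v hvmul (vmul_nonneg v hvmul (vmul_nonneg v hvmul
          (vpow_nonneg v hvfin hvmul hx1 _) (vpow_nonneg v hvfin hvmul hx2 _))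
          (vpow_nonneg v hvfin hvmul hy1 _)) (vpow_nonneg v hvfin hvmul hy2 _)
      have hGint : 0 ≤ v G := by
        refine v_sum_ge v hv0 hvadd _ _ _ fun l _ => ?_
        exact vmul_nonneg v hvmul
          (vpow_nonneg v hvfin hvmul (vmul_nonneg v hvmul hx2 hy1) _)
          (vpow_nonneg v hvfin hvmul (vmul_nonneg v hvmul hx1 hy2) _)
      rw [v_neg v hvfin hvmul]
      exact vmul_nonneg v hvmul hCint hGint
  intro i j hid hjd
  rcases le_total i j with hij | hji
  · exact main i j hij hjd
  · obtain ⟨g, hg, hgint⟩ := main j i hji hid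
    refine ⟨-g, ?_, ?_⟩
    · rw [show x1^i * y1^(d-i) * (x2^j * y2^(d-j)) - x2^i * y2^(d-i) * (x1^j * y1^(d-j))
          = -(x1^j * y1^(d-j) * (x2^i * y2^(d-i)) - x2^j * y2^(d-j) * (x1^i * y1^(d-i))) by ring,
        hg]
      ring
    · rw [v_neg v hvfin hvmul]; exact hgint

include hv0 hvfin hvmul hvadd in
lemma v_cross_eval (d : ℕ) (a b : Fin (d+1) → K)
    (ha : ∀ i, 0 ≤ v (a i)) (hb : ∀ i, 0 ≤ v (b i))
    (x1 y1 x2 y2 : K)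
    (hx1 : 0 ≤ v x1) (hy1 : 0 ≤ v y1) (hx2 : 0 ≤ v x2) (hy2 : 0 ≤ v y2) :
    v (x1 * y2 - x2 * y1) ≤
      v ((evalPair d a b (x1,y1)).1 * (evalPair d a b (x2,y2)).2
        - (evalPair d a b (x2,y2)).1 * (evalPair d a b (x1,y1)).2) := by
  choose g hg hgint using
    cross_term v hv0 hvfin hvmul hvadd d x1 y1 x2 y2 hx1 hy1 hx2 hy2
  have hident : (evalPair d a b (x1,y1)).1 * (evalPair d a b (x2,y2)).2
        - (evalPair d a b (x2,y2)).1 * (evalPair d a b (x1,y1)).2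
      = (x1 * y2 - x2 * y1) *
        ∑ i : Fin (d+1), ∑ j : Fin (d+1),
          a i * b j * g (i:ℕ) (j:ℕ) (by omega) (by omega) := by
    have e1 : (evalPair d a b (x1,y1)).1 * (evalPair d a b (x2,y2)).2
        = ∑ i : Fin (d+1), ∑ j : Fin (d+1),
          (a i * x1^(i:ℕ) * y1^(d-(i:ℕ))) * (b j * x2^(j:ℕ) * y2^(d-(j:ℕ))) := by
      simp only [evalPair]
      exact Finset.sum_mul_sum _ _ _ _
    have e2 : (evalPair d a b (x2,y2)).1 * (evalPair d a b (x1,y1)).2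
        = ∑ i : Fin (d+1), ∑ j : Fin (d+1),
          (a i * x2^(i:ℕ) * y2^(d-(i:ℕ))) * (b j * x1^(j:ℕ) * y1^(d-(j:ℕ))) := by
      simp only [evalPair]
      exact Finset.sum_mul_sum _ _ _ _
    rw [e1, e2, ← Finset.sum_sub_distrib, Finset.mul_sum]
    refine Finset.sum_congr rfl fun i _ => ?_
    rw [← Finset.sum_sub_distrib, Finset.mul_sum]
    refine Finset.sum_congr rfl fun j _ => ?_
    have hij := hg (i:ℕ) (j:ℕ) (by omega) (by omega)
    calc (a i * x1^(i:ℕ) * y1^(d-(i:ℕ))) * (b j * x2^(j:ℕ) * y2^(d-(j:ℕ)))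
          - (a i * x2^(i:ℕ) * y2^(d-(i:ℕ))) * (b j * x1^(j:ℕ) * y1^(d-(j:ℕ)))
        = a i * b j * (x1^(i:ℕ) * y1^(d-(i:ℕ)) * (x2^(j:ℕ) * y2^(d-(j:ℕ)))
            - x2^(i:ℕ) * y2^(d-(i:ℕ)) * (x1^(j:ℕ) * y1^(d-(j:ℕ)))) := by ring
      _ = a i * b j * ((x1*y2 - x2*y1) * g (i:ℕ) (j:ℕ) (by omega) (by omega)) := by rw [hij]
      _ = (x1*y2 - x2*y1) * (a i * b j * g (i:ℕ) (j:ℕ) (by omega) (by omega)) := by ring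
  rw [hident, hvmul]
  refine le_add_of_nonneg_right ?_
  refine v_sum_ge v hv0 hvadd _ _ _ fun i _ => ?_
  refine v_sum_ge v hv0 hvadd _ _ _ fun j _ => ?_
  exact vmul_nonneg v hvmul (vmul_nonneg v hvmul (ha i) (hb j)) (hgint _ _ _ _)

lemma evalPair_smul (d : ℕ) (a b : Fin (d+1) → K) (c : K) (P : K × K) :
    evalPair d a b (c • P) = (c ^ d) • evalPair d a b P := by
  have h1 : (c • P).1 = c * P.1 := rfl
  have h2 : (c • P).2 = c * P.2 := rfl
  refine Prod.ext ?_ ?_ <;>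
  · simp only [evalPair, h1, h2, Prod.smul_fst, Prod.smul_snd, smul_eq_mul, Finset.mul_sum]
    refine Finset.sum_congr rfl fun i _ => ?_
    have hi := i.isLt
    have hc : c ^ (i:ℕ) * c ^ (d-(i:ℕ)) = c ^ d := by
      rw [← pow_add]; congr 1; omega
    rw [mul_pow, mul_pow, ← hc]; ring

lemma evalPair_scale (d : ℕ) (a b : Fin (d+1) → K) (u : K) (P : K × K) :
    evalPair d (fun i => u * a i) (fun i => u * b i) P = u • evalPair d a b P := by
  refine Prod.ext ?_ ?_ <;>
  · simp only [evalPair, Prod.smul_fst, Prod.smul_snd, smul_eq_mul, Finset.mul_sum]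
    refine Finset.sum_congr rfl fun i _ => ?_
    ring

include hv0 hvfin hvmul hvadd in
lemma nonexpand (d : ℕ) (hd : 1 ≤ d) (a b : Fin (d+1) → K)
    (ha : ∀ i, 0 ≤ v (a i)) (hb : ∀ i, 0 ≤ v (b i))
    (hres : v (resultant d a b) = 0) (x1 y1 x2 y2 : K)
    (hx1 : 0 ≤ v x1) (hy1 : 0 ≤ v y1) (hmin1 : min (v x1) (v y1) = 0)
    (hx2 : 0 ≤ v x2) (hy2 : 0 ≤ v y2) (hmin2 : min (v x2) (v y2) = 0) :
    logDist v (x1,y1) (x2,y2) ≤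
      logDist v (evalPair d a b (x1,y1)) (evalPair d a b (x2,y2)) := by
  rw [logDist_norm v (x1,y1) (x2,y2) hmin1 hmin2,
    logDist_norm v _ _
      (reduced_evalPair v hv0 hvfin hvmul hvadd d hd a b ha hb hres x1 y1 hx1 hy1 hmin1)
      (reduced_evalPair v hv0 hvfin hvmul hvadd d hd a b ha hb hres x2 y2 hx2 hy2 hmin2)]
  exact v_cross_eval v hv0 hvfin hvmul hvadd d a b ha hb x1 y1 x2 y2 hx1 hy1 hx2 hy2

end Core

end LDOL

/-- Let `φ` be an endomorphism of `ℙ¹` defined over `K` with good reduction outside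
`S`, and let
`P = P_{−m+1} ↦ P_{−m+2} ↦ … ↦ P_{−1} ↦ P₀ = [0:1] ↦ [0:1]`
be an orbit for `φ` ending in the fixed point `[0:1]` (below, `Q j` denotes `P_{−j}`).
Then for any place `v ∉ S` (i.e. any place at which `φ` has good reduction) and any
integers `0 < s < t ≤ m−1` one has
(a) `δ_v(P_{−t}, P₀) ≤ δ_v(P_{−s}, P₀)`, and (b) `δ_v(P_{−t}, P_{−s}) = δ_v(P_{−t}, P₀)`. -/
theorem logDist_orbit_lemma {K : Type} [Field K] (v : K → WithTop ℤ)
    (hv0 : v 0 = ⊤) (hvfin : ∀ x : K, x ≠ 0 → v x ≠ ⊤)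
    (hvmul : ∀ x y : K, v (x * y) = v x + v y)
    (hvadd : ∀ x y : K, min (v x) (v y) ≤ v (x + y))
    (hvdisc : ∀ n : ℤ, ∃ x : K, v x = (n : WithTop ℤ))
    (d : ℕ) (hd : 1 ≤ d) (a b : Fin (d+1) → K)
    (hgood : GoodReduction v d a b)
    (m : ℕ) (hm : 1 ≤ m) (Q : ℕ → K × K)
    (hQ0 : Q 0 = (0, 1))
    (hQne : ∀ j, j ≤ m - 1 → Q j ≠ (0, 0))
    (horb : ∀ j, j + 1 ≤ m - 1 → ∃ c : K, c ≠ 0 ∧ evalPair d a b (Q (j+1)) = c • Q j)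
    (hfix : ∃ c : K, c ≠ 0 ∧ evalPair d a b (Q 0) = c • Q 0)
    (s t : ℕ) (hs : 0 < s) (hst : s < t) (ht : t ≤ m - 1) :
    logDist v (Q t) (Q 0) ≤ logDist v (Q s) (Q 0) ∧
      logDist v (Q t) (Q s) = logDist v (Q t) (Q 0) := by
  classical
  obtain ⟨u, hu0, hint, _hunit, hres⟩ := hgood
  set a' : Fin (d+1) → K := fun i => u * a i with ha'def
  set b' : Fin (d+1) → K := fun i => u * b i with hb'def
  have ha'int : ∀ i, 0 ≤ v (a' i) := by
    intro i; simp only [ha'def]; exact (hint i).1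
  have hb'int : ∀ i, 0 ≤ v (b' i) := by
    intro i; simp only [hb'def]; exact (hint i).2
  -- uniform orbit step
  have hstep : ∀ j, j ≤ m - 1 → ∃ c : K, c ≠ 0 ∧
      evalPair d a' b' (Q j) = c • Q (j-1) := by
    intro j hj
    cases j with
    | zero =>
      obtain ⟨c, hc0, hc⟩ := hfix
      refine ⟨u * c, mul_ne_zero hu0 hc0, ?_⟩
      simp only [ha'def, hb'def]
      rw [LDOL.evalPair_scale, hc, smul_smul]
    | succ k =>
      obtain ⟨c, hc0, hc⟩ := horb k (by omega)
      refine ⟨u * c, mul_ne_zero hu0 hc0, ?_⟩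
      simp only [ha'def, hb'def]
      rw [LDOL.evalPair_scale, hc, smul_smul]
      norm_num
  -- one-step non-expansion at the level of points of the orbit
  have hstepLD : ∀ i j, i ≤ m-1 → j ≤ m-1 →
      logDist v (Q i) (Q j) ≤ logDist v (Q (i-1)) (Q (j-1)) := by
    intro i j hi hj
    obtain ⟨ci, hci0, hci1, hci2, hcimin⟩ :=
      LDOL.exists_norm v hv0 hvfin hvmul hvdisc (Q i) (hQne i hi)
    obtain ⟨cj, hcj0, hcj1, hcj2, hcjmin⟩ :=
      LDOL.exists_norm v hv0 hvfin hvmul hvdisc (Q j) (hQne j hj)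
    obtain ⟨ei, hei0, hei⟩ := hstep i hi
    obtain ⟨ej, hej0, hej⟩ := hstep j hj
    have h1 : logDist v (Q i) (Q j) = logDist v (ci • Q i) (cj • Q j) := by
      rw [LDOL.logDist_smul_left v hvfin hvmul ci hci0,
        LDOL.logDist_smul_right v hvfin hvmul cj hcj0]
    have h2 := LDOL.nonexpand v hv0 hvfin hvmul hvadd d hd a' b' ha'int hb'int hres
      (ci • Q i).1 (ci • Q i).2 (cj • Q j).1 (cj • Q j).2
      hci1 hci2 hcimin hcj1 hcj2 hcjmin
    rw [Prod.mk.eta, Prod.mk.eta] at h2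
    have h3 : evalPair d a' b' (ci • Q i) = (ci ^ d * ei) • Q (i-1) := by
      rw [LDOL.evalPair_smul, hei, smul_smul]
    have h4 : evalPair d a' b' (cj • Q j) = (cj ^ d * ej) • Q (j-1) := by
      rw [LDOL.evalPair_smul, hej, smul_smul]
    rw [h3, h4,
      LDOL.logDist_smul_left v hvfin hvmul _ (mul_ne_zero (pow_ne_zero d hci0) hei0),
      LDOL.logDist_smul_right v hvfin hvmul _ (mul_ne_zero (pow_ne_zero d hcj0) hej0)] at h2
    rw [h1]; exact h2
  -- iterated non-expansion
  have hiter : ∀ k i j, i ≤ m-1 → j ≤ m-1 →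
      logDist v (Q i) (Q j) ≤ logDist v (Q (i-k)) (Q (j-k)) := by
    intro k
    induction k with
    | zero => intro i j _ _; simp
    | succ k ih =>
      intro i j hi hj
      have h1 := ih i j hi hj
      have h2 := hstepLD (i-k) (j-k) (by omega) (by omega)
      rw [show i - (k+1) = i - k - 1 by omega, show j - (k+1) = j - k - 1 by omega]
      exact le_trans h1 h2
  -- monotonicity of the distance to the fixed point
  have hmono : ∀ i j, i ≤ j → j ≤ m-1 →
      logDist v (Q j) (Q 0) ≤ logDist v (Q i) (Q 0) := by
    intro i j hij hj
    have h := hiter (j-i) j 0 hj (by omega)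
    rwa [show j - (j-i) = i by omega, Nat.zero_sub] at h
  -- ultrametric inequality along the orbit
  have hultra : ∀ i j k, i ≤ m-1 → j ≤ m-1 → k ≤ m-1 →
      min (logDist v (Q i) (Q j)) (logDist v (Q j) (Q k)) ≤ logDist v (Q i) (Q k) := by
    intro i j k hi hj hk
    obtain ⟨ci, hci0, hci1, hci2, hcimin⟩ :=
      LDOL.exists_norm v hv0 hvfin hvmul hvdisc (Q i) (hQne i hi)
    obtain ⟨cj, hcj0, hcj1, hcj2, hcjmin⟩ :=
      LDOL.exists_norm v hv0 hvfin hvmul hvdisc (Q j) (hQne j hj)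
    obtain ⟨ck, hck0, hck1, hck2, hckmin⟩ :=
      LDOL.exists_norm v hv0 hvfin hvmul hvdisc (Q k) (hQne k hk)
    have e1 : logDist v (Q i) (Q j) = logDist v (ci • Q i) (cj • Q j) := by
      rw [LDOL.logDist_smul_left v hvfin hvmul ci hci0,
        LDOL.logDist_smul_right v hvfin hvmul cj hcj0]
    have e2 : logDist v (Q j) (Q k) = logDist v (cj • Q j) (ck • Q k) := by
      rw [LDOL.logDist_smul_left v hvfin hvmul cj hcj0,
        LDOL.logDist_smul_right v hvfin hvmul ck hck0]
    have e3 : logDist v (Q i) (Q k) = logDist v (ci • Q i) (ck • Q k) := by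
      rw [LDOL.logDist_smul_left v hvfin hvmul ci hci0,
        LDOL.logDist_smul_right v hvfin hvmul ck hck0]
    rw [e1, e2, e3, LDOL.logDist_norm v _ _ hcimin hcjmin,
      LDOL.logDist_norm v _ _ hcjmin hckmin, LDOL.logDist_norm v _ _ hcimin hckmin]
    exact LDOL.ultra v hvmul hvadd (ci • Q i) (cj • Q j) (ck • Q k)
      hci1 hci2 hck1 hck2 hcjmin
  -- part (b) by strong induction
  have claim : ∀ t', t' ≤ m-1 → ∀ s', 0 < s' → s' < t' →
      logDist v (Q t') (Q s') = logDist v (Q t') (Q 0) := by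
    intro t'
    induction t' using Nat.strong_induction_on with
    | _ t' IH =>
      intro ht' s' hs' hst'
      have hs'm : s' ≤ m - 1 := by omega
      have e_le := hmono s' t' (le_of_lt hst') ht'
      have hge : logDist v (Q t') (Q 0) ≤ logDist v (Q t') (Q s') := by
        have h0 := hultra t' 0 s' ht' (by omega) hs'm
        refine le_trans (le_min (le_refl _) ?_) h0
        rw [LDOL.logDist_comm v hvfin hvmul (Q 0) (Q s')]
        exact e_le
      by_contra hne
      have hlt : logDist v (Q t') (Q 0) < logDist v (Q t') (Q s') :=
        lt_of_le_of_ne hge (fun h => hne h.symm)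
      have hs0 : logDist v (Q s') (Q 0) ≤ logDist v (Q t') (Q 0) := by
        have h0 := hultra t' s' 0 ht' hs'm (by omega)
        rcases min_le_iff.mp h0 with h | h
        · exact absurd h (not_le.mpr hlt)
        · exact h
      have heq : logDist v (Q s') (Q 0) = logDist v (Q t') (Q 0) :=
        le_antisymm hs0 e_le
      have h3 : logDist v (Q t') (Q s') ≤ logDist v (Q (t'-s')) (Q 0) := by
        have h := hiter s' t' s' ht' hs'm
        rwa [Nat.sub_self] at h
      have h4 : t' - s' < s' := by
        by_contra h4
        push_neg at h4
        have h5 := hmono s' (t'-s') h4 (by omega)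
        exact lt_irrefl _ (lt_of_lt_of_le (lt_of_le_of_lt (h5.trans heq.le) hlt) h3)
      have h5 : logDist v (Q t') (Q s') ≤ logDist v (Q s') (Q (s' - (t'-s'))) := by
        have h := hiter (t'-s') t' s' ht' hs'm
        rwa [show t' - (t'-s') = s' by omega] at h
      have h6 : logDist v (Q s') (Q (s'-(t'-s'))) = logDist v (Q s') (Q 0) :=
        IH s' hst' hs'm (s'-(t'-s')) (by omega) (by omega)
      have h7 : logDist v (Q t') (Q s') ≤ logDist v (Q t') (Q 0) := by
        rw [← heq]; exact h5.trans (le_of_eq h6)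
      exact hne (le_antisymm h7 hge)
  exact ⟨hmono s t (le_of_lt hst) ht, claim t ht s hs hst⟩
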